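/- For the twice integrated Wiener process (q = 2) at steady state, the rescaled Kalman gain vector is K* = ((3 + √3)/12, 1, (3 − √3)/2). -/

import Mathlib

open Matrix

/-- For the twice integrated Wiener process (q = 2) at steady state, the
rescaled Kalman gain vector is K* = ((3 + √3)/12, 1, (3 − √3)/2). -/
theorem iwp2_steady_state_gain (σ h c00 : ℝ) (hσ : 0 < σ) (hh : 0 < h) :
    let P : Matrix (Fin 3) (Fin 3) ℝ := !![1, 1, 1; 0, 1, 2; 0, 0, 1]
    let Qt : Matrix (Fin 3) (Fin 3) ℝ := Matrix.of fun i j =>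
      σ ^ 2 * h ^ 5 /
        (((5 - (i : ℕ) - (j : ℕ)) * (2 - (i : ℕ)).factorial * (2 - (j : ℕ)).factorial *
          (i : ℕ).factorial * (j : ℕ).factorial : ℕ) : ℝ)
    let C : Matrix (Fin 3) (Fin 3) ℝ := (σ ^ 2 * h ^ 5) •
      !![c00, 0, -(Real.sqrt 3) / 144; 0, 0, 0; -(Real.sqrt 3) / 144, 0, Real.sqrt 3 / 24]
    let Cpred : Matrix (Fin 3) (Fin 3) ℝ := P * C * Pᵀ + Qt
    (fun i => Cpred i 1 / Cpred 1 1) =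
      ![(3 + Real.sqrt 3) / 12, 1, (3 - Real.sqrt 3) / 2] := by
  intro P Qt C Cpred
  have hs : (0:ℝ) < σ ^ 2 * h ^ 5 := by positivity
  have hr : Real.sqrt 3 ^ 2 = 3 := Real.sq_sqrt (by norm_num)
  have hrpos : (0:ℝ) ≤ Real.sqrt 3 := Real.sqrt_nonneg 3
  have hv : Matrix.vecHead (Matrix.vecTail (fun _ : Fin 3 => (0:ℝ))) = 0 := rfl
  funext i
  fin_cases i <;>
  · simp only [Cpred, C, Qt, P, Matrix.add_apply, Matrix.mul_apply, Fin.sum_univ_three,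
      Matrix.transpose_apply, Matrix.smul_apply, Matrix.of_apply, Matrix.cons_val',
      Matrix.cons_val_zero, Matrix.cons_val_one, Matrix.head_cons, Matrix.empty_val',
      Matrix.cons_val_fin_one, Matrix.head_fin_const, hv, smul_eq_mul, Matrix.cons_val_two]
    norm_num [Matrix.vecHead, Matrix.vecTail]
    first
    | (rw [← ne_eq]; positivity)
    | (rw [div_eq_iff (by positivity)]
       nlinarith [hr, hs, hrpos])
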